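/- Two-state donation game solution: let 0 < b < B, 0 < c < B − b, and c/(B−b) < λ < 1. Consider the multi-state game with states S = {H, L}, action sets X_s = Y_s = {0,1} in both states, transitions T(x,y;s) = H if (x,y) = (1,1) and T(x,y;s) = L otherwise (for both s), and utilities U(x,y;H) = B·x − c·y and U(x,y;L) = b·x − c·y. Then the functions m(H) = m(L) = 0 and M(L) = b, M(H) = λ·b + (1−λ)·B satisfy the fixed point equations m(s) = min_{x∈{0,1}} max_{y∈{0,1}} (λ·m(T(x,y;s)) + (1−λ)·U(x,y;s)) and M(s) = max_{x∈{0,1}} min_{y∈{0,1}} (λ·M(T(x,y;s)) + (1−λ)·U(x,y;s)) for s ∈ {H, L}. -/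

import Mathlib

open Filter Topology

/-- The Bellman min–max operator: `F(m)(s) = min_x max_y (λ·m(T(x,y;s)) + (1−λ)·U(x,y;s))`,
where `(1−λ)·U` is the rescaled utility `U_λ`. -/
noncomputable def bellmanMinMax {S : Type*} (X Y : S → Type*)
    [∀ s, Fintype (X s)] [∀ s, Nonempty (X s)]
    [∀ s, Fintype (Y s)] [∀ s, Nonempty (Y s)]
    (T : ∀ s, X s → Y s → S) (U : ∀ s, X s → Y s → ℝ) (lam : ℝ)
    (m : S → ℝ) (s : S) : ℝ :=
  Finset.univ.inf' Finset.univ_nonempty fun x : X s =>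
    Finset.univ.sup' Finset.univ_nonempty fun y : Y s =>
      lam * m (T s x y) + (1 - lam) * U s x y

/-- The Bellman max–min operator: `G(M)(s) = max_x min_y (λ·M(T(x,y;s)) + (1−λ)·U(x,y;s))`. -/
noncomputable def bellmanMaxMin {S : Type*} (X Y : S → Type*)
    [∀ s, Fintype (X s)] [∀ s, Nonempty (X s)]
    [∀ s, Fintype (Y s)] [∀ s, Nonempty (Y s)]
    (T : ∀ s, X s → Y s → S) (U : ∀ s, X s → Y s → ℝ) (lam : ℝ)
    (M : S → ℝ) (s : S) : ℝ :=
  Finset.univ.sup' Finset.univ_nonempty fun x : X s =>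
    Finset.univ.inf' Finset.univ_nonempty fun y : Y s =>
      lam * M (T s x y) + (1 - lam) * U s x y

/-- `m₀`, the minimum of the utility over all state–action triples. -/
noncomputable def utilMin {S : Type*} [Fintype S] [Nonempty S] (X Y : S → Type*)
    [∀ s, Fintype (X s)] [∀ s, Nonempty (X s)]
    [∀ s, Fintype (Y s)] [∀ s, Nonempty (Y s)]
    (U : ∀ s, X s → Y s → ℝ) : ℝ :=
  haveI : Nonempty ((s : S) × X s × Y s) :=
    ⟨⟨Classical.arbitrary S, Classical.arbitrary _, Classical.arbitrary _⟩⟩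
  Finset.univ.inf' Finset.univ_nonempty fun p : Σ s : S, X s × Y s => U p.1 p.2.1 p.2.2

/-- `M₀`, the maximum of the utility over all state–action triples. -/
noncomputable def utilMax {S : Type*} [Fintype S] [Nonempty S] (X Y : S → Type*)
    [∀ s, Fintype (X s)] [∀ s, Nonempty (X s)]
    [∀ s, Fintype (Y s)] [∀ s, Nonempty (Y s)]
    (U : ∀ s, X s → Y s → ℝ) : ℝ :=
  haveI : Nonempty ((s : S) × X s × Y s) :=
    ⟨⟨Classical.arbitrary S, Classical.arbitrary _, Classical.arbitrary _⟩⟩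
  Finset.univ.sup' Finset.univ_nonempty fun p : Σ s : S, X s × Y s => U p.1 p.2.1 p.2.2

/-- The two states of the donation game: `H` (high benefit) and `L` (low benefit). -/
inductive DState where
  | H : DState
  | L : DState
deriving DecidableEq

instance : Fintype DState := ⟨{DState.H, DState.L}, fun x => by cases x <;> simp⟩

instance : Nonempty DState := ⟨DState.H⟩

/-- Two-state donation game solution: with states `{H, L}`, actions
`{0,1}` for both players, transition to `H` exactly on mutual cooperation `(1,1)`,
and utilities `U(x,y;H) = B·x − c·y`, `U(x,y;L) = b·x − c·y`, the functions
`m ≡ 0` and `M(L) = b`, `M(H) = λ·b + (1−λ)·B` satisfy the min–max and max–min fixed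
point equations whenever `0 < b < B`, `0 < c < B − b` and `c/(B−b) < λ < 1`. -/
theorem two_state_donation_game_solution
    (b B c lam : ℝ)
    (hb : 0 < b) (hbB : b < B) (hc : 0 < c) (hcBb : c < B - b)
    (hlam1 : c / (B - b) < lam) (hlam2 : lam < 1) :
    (∀ s : DState,
      (fun _ : DState => (0 : ℝ)) s =
        bellmanMinMax (fun _ : DState => Fin 2) (fun _ : DState => Fin 2)
          (fun _ x y => if x = 1 ∧ y = 1 then DState.H else DState.L)
          (fun s x y => (match s with | DState.H => B | DState.L => b) * (x.val : ℝ)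
            - c * (y.val : ℝ))
          lam (fun _ : DState => (0 : ℝ)) s) ∧
    (∀ s : DState,
      (fun s : DState => match s with
        | DState.H => lam * b + (1 - lam) * B
        | DState.L => b) s =
        bellmanMaxMin (fun _ : DState => Fin 2) (fun _ : DState => Fin 2)
          (fun _ x y => if x = 1 ∧ y = 1 then DState.H else DState.L)
          (fun s x y => (match s with | DState.H => B | DState.L => b) * (x.val : ℝ)
            - c * (y.val : ℝ))
          lam (fun s : DState => match s with
            | DState.H => lam * b + (1 - lam) * B
            | DState.L => b) s) := by
  have huniv : (Finset.univ : Finset (Fin 2)) = {0, 1} := by decide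
  have hBb : 0 < B - b := by linarith
  have hl : c < lam * (B - b) := (div_lt_iff₀ hBb).mp hlam1
  have h1l : 0 < 1 - lam := by linarith
  have key : 0 ≤ (1 - lam) * (lam * (B - b) - c) :=
    le_of_lt (mul_pos h1l (by linarith))
  constructor <;> intro s <;> cases s <;>
    simp only [bellmanMinMax, bellmanMaxMin, huniv] <;>
    simp
  · rw [sup_eq_left.mpr (by nlinarith), sup_eq_left.mpr (by nlinarith),
      inf_eq_left.mpr (by nlinarith)]
  · rw [sup_eq_left.mpr (by nlinarith), sup_eq_left.mpr (by nlinarith),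
      inf_eq_left.mpr (by nlinarith)]
  · rw [inf_eq_right.mpr (by nlinarith), inf_eq_left.mpr (by nlinarith),
      sup_eq_right.mpr (by nlinarith)]
  · rw [inf_eq_right.mpr (by nlinarith), inf_eq_left.mpr (by nlinarith),
      sup_eq_right.mpr (by nlinarith)]
    ring
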